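/- Let φ, ψ ∈ C_c^∞(ℝⁿ) and let L_φ, L_ψ ∈ ℕ₀ ∪ {−1} be their vanishing-moment orders. Set φ_l := 2^{ln}φ(2^l·) and ψ_j := 2^{jn}ψ(2^j·). Then there is a constant C > 0, independent of j and l, such that ‖φ_l ∗ ψ_j‖_{L_∞(ℝⁿ)} ≤ C 2^{(l−j)(L_ψ+1)} 2^{ln} whenever l ≤ j, and ‖φ_l ∗ ψ_j‖_{L_∞(ℝⁿ)} ≤ C 2^{(j−l)(L_φ+1)} 2^{jn} whenever j < l. -/

import Mathlib

open MeasureTheory ENNReal Filter Topology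

noncomputable section

def lqNorm (q : ℝ≥0∞) (a : ℕ → ℝ≥0∞) : ℝ≥0∞ :=
  if q = ∞ then ⨆ k, a k else (∑' k, a k ^ q.toReal) ^ (1 / q.toReal)

def lpSum {ι : Type*} (p : ℝ≥0∞) (a : ι → ℝ≥0∞) : ℝ≥0∞ :=
  if p = ∞ then ⨆ m, a m else (∑' m, a m ^ p.toReal) ^ (1 / p.toReal)
abbrev Dstrb (n : ℕ) := ((Fin n → ℝ) → ℝ) →ₗ[ℝ] ℝ

def distConv (n : ℕ) (f : Dstrb n) (φ : (Fin n → ℝ) → ℝ) (x : Fin n → ℝ) : ℝ :=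
  f fun y => φ (x - y)

def IsTestFun (n : ℕ) (g : (Fin n → ℝ) → ℝ) : Prop :=
  ContDiff ℝ (⊤ : ℕ∞) g ∧ HasCompactSupport g

def phiOf (n : ℕ) (φ₀ : (Fin n → ℝ) → ℝ) (x : Fin n → ℝ) : ℝ :=
  φ₀ x - (2 : ℝ)⁻¹ ^ n * φ₀ ((2 : ℝ)⁻¹ • x)

def phiFam (n : ℕ) (φ₀ : (Fin n → ℝ) → ℝ) : ℕ → (Fin n → ℝ) → ℝ
  | 0 => φ₀
  | k + 1 => fun x => (2 : ℝ) ^ ((k + 1) * n) * phiOf n φ₀ ((2 : ℝ) ^ (k + 1) • x)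

def kernFam (n : ℕ) (ψ₀ ψ : (Fin n → ℝ) → ℝ) : ℕ → (Fin n → ℝ) → ℝ
  | 0 => ψ₀
  | k + 1 => fun x => (2 : ℝ) ^ ((k + 1) * n) * ψ ((2 : ℝ) ^ (k + 1) • x)

def besovNorm (n : ℕ) (p q : ℝ≥0∞) (t : ℕ → (Fin n → ℝ) → ℝ)
    (φ₀ : (Fin n → ℝ) → ℝ) (f : Dstrb n) : ℝ≥0∞ :=
  lqNorm q fun k =>
    eLpNorm (fun x => t k x * distConv n f (phiFam n φ₀ k) x) p volume

def seSeminorm (n : ℕ) (N : ℕ) (g : (Fin n → ℝ) → ℝ) : ℝ≥0∞ :=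
  ⨆ x : Fin n → ℝ, ENNReal.ofReal
    (Real.exp (N * ‖x‖) * ∑ i ∈ Finset.range (N + 1), ‖iteratedFDeriv ℝ i g x‖)

def MemSe' (n : ℕ) (f : Dstrb n) : Prop :=
  ∃ (C : ℝ) (N : ℕ), 0 < C ∧ ∀ g : (Fin n → ℝ) → ℝ, ContDiff ℝ (⊤ : ℕ∞) g →
    ENNReal.ofReal |f g| ≤ ENNReal.ofReal C * seSeminorm n N g

def MomentsVanish (n : ℕ) (L : ℤ) (ψ : (Fin n → ℝ) → ℝ) : Prop :=
  ∀ β : Fin n → ℕ, ((∑ i, β i : ℕ) : ℤ) ≤ L → (∫ x, (∏ i, x i ^ β i) * ψ x) = 0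



namespace ConvKernelAux

open MeasureTheory Finset

variable {n : ℕ}

lemma hasDerivAt_line (f : (Fin n → ℝ) → ℝ) (hf : ContDiff ℝ (⊤ : ℕ∞) f) (k : ℕ)
    (x y : Fin n → ℝ) (t : ℝ) :
    HasDerivAt (fun s : ℝ => iteratedFDeriv ℝ k f (x - s • y) (fun _ => y))
      (-(iteratedFDeriv ℝ (k+1) f (x - t • y) (fun _ => y))) t := by
  have hc : HasDerivAt (fun s : ℝ => x - s • y) (-y) t := by
    simpa using (((hasDerivAt_id t).smul_const y).const_sub x)
  have hd : DifferentiableAt ℝ (iteratedFDeriv ℝ k f) (x - t • y) :=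
    (hf.differentiable_iteratedFDeriv (by exact_mod_cast WithTop.coe_lt_top k)).differentiableAt
  have h1 : HasDerivAt (fun s : ℝ => iteratedFDeriv ℝ k f (x - s • y))
      (fderiv ℝ (iteratedFDeriv ℝ k f) (x - t • y) (-y)) t :=
    hd.hasFDerivAt.comp_hasDerivAt t hc
  have h2 := (ContinuousMultilinearMap.apply ℝ (fun _ : Fin k => (Fin n → ℝ)) ℝ
      (fun _ => y)).hasFDerivAt.comp_hasDerivAt t h1
  convert h2 using 1
  · rfl
  · rfl
  · rfl
  rw [iteratedFDeriv_succ_apply_left]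
  simp only [map_neg, ContinuousMultilinearMap.apply_apply, ContinuousMultilinearMap.neg_apply]
  rfl

lemma continuous_line (f : (Fin n → ℝ) → ℝ) (hf : ContDiff ℝ (⊤ : ℕ∞) f) (k : ℕ)
    (x y : Fin n → ℝ) :
    Continuous (fun s : ℝ => iteratedFDeriv ℝ k f (x - s • y) (fun _ => y)) := by
  exact (ContinuousMultilinearMap.apply ℝ (fun _ : Fin k => (Fin n → ℝ)) ℝ
      (fun _ => y)).continuous.comp ((hf.continuous_iteratedFDeriv
      (by exact_mod_cast le_top)).comp
      (continuous_const.sub (continuous_id.smul continuous_const)))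

lemma taylor_line (f : (Fin n → ℝ) → ℝ) (hf : ContDiff ℝ (⊤ : ℕ∞) f) (x y : Fin n → ℝ) :
    ∀ k : ℕ, f (x - y) =
      (∑ m ∈ Finset.range (k+1),
        ((-1 : ℝ)^m / (m.factorial : ℝ)) * iteratedFDeriv ℝ m f x (fun _ => y))
      + (-1 : ℝ)^(k+1) * ∫ t in (0:ℝ)..1,
          ((1-t)^k / (k.factorial : ℝ)) * iteratedFDeriv ℝ (k+1) f (x - t • y) (fun _ => y) := by
  intro k
  induction k with
  | zero =>
      have hμ : (∫ t in (0:ℝ)..1,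
          -(iteratedFDeriv ℝ 1 f (x - t • y) (fun _ => y)))
          = f (x - (1:ℝ) • y) - f (x - (0:ℝ) • y) := by
        have := intervalIntegral.integral_eq_sub_of_hasDerivAt
          (f := fun s : ℝ => iteratedFDeriv ℝ 0 f (x - s • y) (fun _ => y))
          (f' := fun t : ℝ => -(iteratedFDeriv ℝ 1 f (x - t • y) (fun _ => y)))
          (a := 0) (b := 1)
          (fun t _ => hasDerivAt_line f hf 0 x y t)
          (((continuous_line f hf 1 x y).neg).intervalIntegrable 0 1)
        simpa using this
      rw [intervalIntegral.integral_neg] at hμ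
      simp only [one_smul, zero_smul, sub_zero] at hμ
      simp only [zero_add, Finset.sum_range_one, pow_zero, Nat.factorial_zero, Nat.cast_one,
        div_one, one_mul, pow_one, iteratedFDeriv_zero_apply, neg_one_mul]
      linarith [hμ]
  | succ k ih =>
      set h : ℕ → ℝ → ℝ := fun m t => iteratedFDeriv ℝ m f (x - t • y) (fun _ => y) with hh
      have ibp : (∫ t in (0:ℝ)..1, ((1-t)^k / (k.factorial : ℝ)) * h (k+1) t)
          = (1 / ((k+1).factorial : ℝ)) * iteratedFDeriv ℝ (k+1) f x (fun _ => y)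
            - ∫ t in (0:ℝ)..1, ((1-t)^(k+1) / ((k+1).factorial : ℝ)) * h (k+2) t := by
        have hfact : ((k+1).factorial : ℝ) = (k+1) * (k.factorial : ℝ) := by
          rw [Nat.factorial_succ]; push_cast; ring
        have hkne : (k.factorial : ℝ) ≠ 0 := by positivity
        have hderiv : ∀ t : ℝ, HasDerivAt
            (fun t : ℝ => (-((1-t)^(k+1) / ((k+1).factorial : ℝ))) * h (k+1) t)
            (((1-t)^k / (k.factorial : ℝ)) * h (k+1) t
              + ((1-t)^(k+1) / ((k+1).factorial : ℝ)) * h (k+2) t) t := by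
          intro t
          have h1 : HasDerivAt (fun t : ℝ => -((1-t)^(k+1) / ((k+1).factorial : ℝ)))
              ((1-t)^k / (k.factorial : ℝ)) t := by
            have hb : HasDerivAt (fun t : ℝ => (1-t)) (-1) t := by
              simpa using (hasDerivAt_id t).const_sub (1:ℝ)
            have := ((hb.pow (k+1)).div_const ((k+1).factorial : ℝ)).neg
            convert this using 1
            · rfl
            · rfl
            · rfl
            rw [hfact]
            rw [Nat.add_sub_cancel]; push_cast
            field_simp
          have h2 : HasDerivAt (h (k+1)) (-(h (k+2) t)) t := hasDerivAt_line f hf (k+1) x y t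
          have := h1.mul h2
          convert this using 1
          · rfl
          · rfl
          · rfl
          ring
        have hcont1 := (continuous_line f hf (k+1) x y)
        have hcont2 := (continuous_line f hf (k+2) x y)
        have hInt1 : IntervalIntegrable
            (fun t : ℝ => ((1-t)^k / (k.factorial : ℝ)) * h (k+1) t) volume 0 1 :=
          (((continuous_const.sub continuous_id).pow k |>.div_const _).mul
            hcont1).intervalIntegrable 0 1
        have hInt2 : IntervalIntegrable
            (fun t : ℝ => ((1-t)^(k+1) / (((k+1).factorial : ℝ))) * h (k+2) t) volume 0 1 :=
          (((continuous_const.sub continuous_id).pow (k+1) |>.div_const _).mul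
            hcont2).intervalIntegrable 0 1
        have key := intervalIntegral.integral_eq_sub_of_hasDerivAt
          (f := fun t : ℝ => (-((1-t)^(k+1) / ((k+1).factorial : ℝ))) * h (k+1) t)
          (f' := fun t : ℝ => ((1-t)^k / (k.factorial : ℝ)) * h (k+1) t
              + ((1-t)^(k+1) / ((k+1).factorial : ℝ)) * h (k+2) t)
          (a := 0) (b := 1) (fun t _ => hderiv t) (hInt1.add hInt2)
        rw [intervalIntegral.integral_add hInt1 hInt2] at key
        have h0 : h (k+1) 0 = iteratedFDeriv ℝ (k+1) f x (fun _ => y) := by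
          simp [hh]
        simp only [sub_self, sub_zero, zero_pow (Nat.succ_ne_zero k), zero_div, neg_zero,
          zero_mul, one_pow, zero_sub, zero_smul] at key
        rw [h0] at key
        linarith [key]
      rw [ih, ibp]
      have e2 : k + 1 + 1 = k + 2 := rfl
      conv_rhs => rw [Finset.sum_range_succ, e2]
      simp only [hh]
      ring

lemma remainder_bound (f : (Fin n → ℝ) → ℝ) (k : ℕ) (x y : Fin n → ℝ) (B : ℝ)
    (hB : ∀ z, ‖iteratedFDeriv ℝ (k+1) f z‖ ≤ B) :
    |∫ t in (0:ℝ)..1, ((1-t)^k / (k.factorial : ℝ)) *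
        iteratedFDeriv ℝ (k+1) f (x - t • y) (fun _ => y)| ≤ B * ‖y‖^(k+1) := by
  have hB0 : 0 ≤ B := le_trans (norm_nonneg _) (hB x)
  have key := intervalIntegral.norm_integral_le_of_norm_le_const
    (f := fun t : ℝ => ((1-t)^k / (k.factorial : ℝ)) *
        iteratedFDeriv ℝ (k+1) f (x - t • y) (fun _ => y))
    (a := 0) (b := 1) (C := B * ‖y‖^(k+1)) ?_
  · simpa [Real.norm_eq_abs] using key
  · intro t ht
    rw [Set.uIoc_of_le (by norm_num : (0:ℝ) ≤ 1)] at ht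
    have h1 : |(1-t)^k / (k.factorial : ℝ)| ≤ 1 := by
      rw [abs_div, abs_pow]
      have h1t : |1 - t| ≤ 1 := by
        rw [abs_le]; constructor <;> nlinarith [ht.1, ht.2]
      have hp1 : |1 - t| ^ k ≤ 1 := pow_le_one₀ (abs_nonneg _) h1t
      have hfac : (1:ℝ) ≤ |(k.factorial : ℝ)| := by
        rw [abs_of_nonneg (by positivity)]
        exact_mod_cast Nat.one_le_iff_ne_zero.mpr (Nat.factorial_ne_zero k)
      calc |1-t|^k / |(k.factorial : ℝ)| ≤ |1-t|^k :=
            div_le_self (by positivity) hfac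
          _ ≤ 1 := hp1
    have h2 : ‖iteratedFDeriv ℝ (k+1) f (x - t • y) (fun _ => y)‖ ≤ B * ‖y‖^(k+1) := by
      calc ‖iteratedFDeriv ℝ (k+1) f (x - t • y) (fun _ => y)‖
          ≤ ‖iteratedFDeriv ℝ (k+1) f (x - t • y)‖ * ∏ _i : Fin (k+1), ‖y‖ :=
            (iteratedFDeriv ℝ (k+1) f (x - t • y)).le_opNorm _
        _ = ‖iteratedFDeriv ℝ (k+1) f (x - t • y)‖ * ‖y‖^(k+1) := by
            rw [Finset.prod_const, Finset.card_univ, Fintype.card_fin]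
        _ ≤ B * ‖y‖^(k+1) := by
            apply mul_le_mul_of_nonneg_right (hB _) (by positivity)
    calc ‖((1-t)^k / (k.factorial : ℝ)) * iteratedFDeriv ℝ (k+1) f (x - t • y) (fun _ => y)‖
        = |(1-t)^k / (k.factorial : ℝ)| * ‖iteratedFDeriv ℝ (k+1) f (x - t • y) (fun _ => y)‖ := by
          rw [norm_mul]; rfl
      _ ≤ 1 * (B * ‖y‖^(k+1)) := by
          apply mul_le_mul h1 h2 (norm_nonneg _) zero_le_one
      _ = B * ‖y‖^(k+1) := one_mul _

lemma diag_expand (m : ℕ) (T : ContinuousMultilinearMap ℝ (fun _ : Fin m => (Fin n → ℝ)) ℝ)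
    (y : Fin n → ℝ) :
    T (fun _ => y) = ∑ d : Fin m → Fin n,
      (∏ p : Fin m, y (d p)) * T (fun p => Pi.single (d p) 1) := by
  have hy : (fun _ : Fin m => y)
      = fun _ : Fin m => ∑ i : Fin n, y i • (Pi.single i (1:ℝ) : Fin n → ℝ) := by
    funext _
    have h1 : ∀ i : Fin n, y i • (Pi.single i (1:ℝ) : Fin n → ℝ) = Pi.single i (y i) := by
      intro i
      rw [← Pi.single_smul, smul_eq_mul, mul_one]
    simp_rw [h1]
    exact (Finset.univ_sum_single y).symm
  rw [hy, T.map_sum]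
  refine Finset.sum_congr rfl fun d _ => ?_
  rw [T.map_smul_univ]
  rfl

lemma prod_comp_eq_monomial (m : ℕ) (d : Fin m → Fin n) (y : Fin n → ℝ) :
    (∏ p : Fin m, y (d p)) =
      ∏ i : Fin n, y i ^ (Finset.univ.filter (fun p => d p = i)).card := by
  rw [← Finset.prod_fiberwise_of_maps_to (fun p _ => Finset.mem_univ (d p)) (fun p => y (d p))]
  refine Finset.prod_congr rfl fun i _ => ?_
  rw [Finset.prod_congr rfl (fun p hp => by rw [(Finset.mem_filter.mp hp).2] :
      ∀ p ∈ Finset.univ.filter (fun p => d p = i), y (d p) = y i)]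
  rw [Finset.prod_const]

lemma sum_fiber_card (m : ℕ) (d : Fin m → Fin n) :
    (∑ i : Fin n, (Finset.univ.filter (fun p => d p = i)).card) = m := by
  rw [← Finset.card_eq_sum_card_fiberwise (fun p _ => Finset.mem_univ (d p))]
  simp

lemma integral_diag_mul_eq_zero (g : (Fin n → ℝ) → ℝ) (hgc : Continuous g)
    (hgs : HasCompactSupport g) (M m : ℕ) (hm : m < M)
    (hmom : ∀ β : Fin n → ℕ, (∑ i, β i) < M → (∫ y, (∏ i, y i ^ β i) * g y) = 0)
    (T : ContinuousMultilinearMap ℝ (fun _ : Fin m => (Fin n → ℝ)) ℝ) :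
    (∫ y, T (fun _ => y) * g y) = 0 := by
  have hstep : (∫ y, T (fun _ => y) * g y)
      = ∑ d : Fin m → Fin n, ∫ y,
          ((∏ p : Fin m, y (d p)) * T (fun p => Pi.single (d p) 1)) * g y := by
    rw [← integral_finset_sum]
    · congr 1
      funext y
      rw [diag_expand m T y, Finset.sum_mul]
    · intro d _
      apply Continuous.integrable_of_hasCompactSupport
      · exact ((Continuous.mul (by continuity) continuous_const).mul hgc)
      · exact hgs.mul_left
  rw [hstep]
  refine Finset.sum_eq_zero fun d _ => ?_
  have hre : (fun y : Fin n → ℝ =>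
        ((∏ p : Fin m, y (d p)) * T (fun p => Pi.single (d p) 1)) * g y)
      = fun y => T (fun p => Pi.single (d p) 1) * ((∏ i : Fin n,
          y i ^ (Finset.univ.filter (fun p => d p = i)).card) * g y) := by
    funext y
    rw [← prod_comp_eq_monomial]
    ring
  rw [hre, integral_const_mul, hmom _ (by rw [sum_fiber_card]; exact hm), mul_zero]

lemma core (f : (Fin n → ℝ) → ℝ) (hf : ContDiff ℝ (⊤ : ℕ∞) f)
    (hfs : HasCompactSupport f) (M : ℕ) :
    ∃ B : ℝ, 0 ≤ B ∧ ∀ g : (Fin n → ℝ) → ℝ, Continuous g → HasCompactSupport g →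
      (∀ β : Fin n → ℕ, (∑ i, β i) < M → (∫ y, (∏ i, y i ^ β i) * g y) = 0) →
      ∀ x, |∫ y, f (x - y) * g y| ≤ B * ∫ y, ‖y‖^M * |g y| := by
  obtain ⟨B0, hB0⟩ := (hf.continuous_iteratedFDeriv
    (m := M) (by exact_mod_cast le_top)).bounded_above_of_compact_support (hfs.iteratedFDeriv M)
  refine ⟨max B0 0, le_max_right _ _, ?_⟩
  intro g hgc hgs hmom x
  set B := max B0 0 with hBdef
  have hB : ∀ z, ‖iteratedFDeriv ℝ M f z‖ ≤ B := fun z => le_trans (hB0 z) (le_max_left _ _)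
  have hBnn : 0 ≤ B := le_max_right _ _
  have hgint : Integrable (fun y : Fin n → ℝ => ‖y‖^M * |g y|) := by
    apply Continuous.integrable_of_hasCompactSupport
    · exact (continuous_norm.pow M).mul hgc.abs
    · have h1 : HasCompactSupport (fun y : Fin n → ℝ => ‖g y‖) := hgs.norm
      simpa [Real.norm_eq_abs, Pi.mul_def] using h1.mul_left (f := fun y : Fin n → ℝ => ‖y‖^M)
  have hmono : ∀ h : (Fin n → ℝ) → ℝ, (∀ y, |h y| ≤ B * ‖y‖^M) →
      |∫ y, h y * g y| ≤ B * ∫ y, ‖y‖^M * |g y| := by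
    intro h hh
    calc |∫ y, h y * g y| = ‖∫ y, h y * g y‖ := (Real.norm_eq_abs _).symm
      _ ≤ ∫ y, ‖h y * g y‖ := norm_integral_le_integral_norm _
      _ ≤ ∫ y, B * (‖y‖^M * |g y|) := by
          apply integral_mono_of_nonneg (Filter.Eventually.of_forall fun y => norm_nonneg _)
            (hgint.const_mul B)
          apply Filter.Eventually.of_forall
          intro y
          calc ‖h y * g y‖ = |h y| * |g y| := by rw [norm_mul]; rfl
            _ ≤ (B * ‖y‖^M) * |g y| := mul_le_mul_of_nonneg_right (hh y) (abs_nonneg _)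
            _ = B * (‖y‖^M * |g y|) := by ring
      _ = B * ∫ y, ‖y‖^M * |g y| := integral_const_mul _ _
  rcases Nat.eq_zero_or_eq_succ_pred M with hM | hM
  · subst hM
    apply hmono
    intro y
    have h1 := hB (x - y)
    rw [norm_iteratedFDeriv_zero] at h1
    simpa [Real.norm_eq_abs] using h1
  · set K := M - 1 with hK
    have hMK : M = K + 1 := hM
    set S : (Fin n → ℝ) → ℝ := fun y => ∑ m ∈ Finset.range M,
      ((-1 : ℝ)^m / (m.factorial : ℝ)) * iteratedFDeriv ℝ m f x (fun _ => y) with hSdef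
    have hScont : Continuous S := by
      apply continuous_finset_sum
      intro m _
      exact continuous_const.mul ((iteratedFDeriv ℝ m f x).coe_continuous.comp
        (continuous_pi fun _ => continuous_id))
    have hSg : Integrable (fun y => S y * g y) :=
      (hScont.mul hgc).integrable_of_hasCompactSupport hgs.mul_left
    have hfg : Integrable (fun y => f (x - y) * g y) :=
      ((hf.continuous.comp (continuous_const.sub continuous_id)).mul
        hgc).integrable_of_hasCompactSupport hgs.mul_left
    have h2 : Integrable (fun y => (f (x - y) - S y) * g y) := by
      have heq : (fun y => f (x - y) * g y - S y * g y)
          = fun y => (f (x - y) - S y) * g y := by funext y; ring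
      exact heq ▸ (hfg.sub hSg)
    have hsplit : (∫ y, f (x - y) * g y)
        = (∫ y, S y * g y) + ∫ y, (f (x - y) - S y) * g y := by
      rw [← integral_add hSg h2]
      congr 1
      funext y
      ring
    have hSzero : (∫ y, S y * g y) = 0 := by
      have hrw : (fun y => S y * g y) = fun y => ∑ m ∈ Finset.range M,
          (((-1 : ℝ)^m / (m.factorial : ℝ)) * iteratedFDeriv ℝ m f x (fun _ => y)) * g y := by
        funext y
        rw [hSdef, Finset.sum_mul]
      rw [hrw, integral_finset_sum]
      · refine Finset.sum_eq_zero fun m hm => ?_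
        have h1 : (fun y : Fin n → ℝ =>
            (((-1 : ℝ)^m / (m.factorial : ℝ)) * iteratedFDeriv ℝ m f x (fun _ => y)) * g y)
            = fun y => ((-1 : ℝ)^m / (m.factorial : ℝ)) *
                ((iteratedFDeriv ℝ m f x) (fun _ => y) * g y) := by
          funext y; ring
        rw [h1, integral_const_mul,
          integral_diag_mul_eq_zero g hgc hgs M m (Finset.mem_range.mp hm) hmom, mul_zero]
      · intro m _
        refine (Continuous.mul ?_ hgc).integrable_of_hasCompactSupport hgs.mul_left
        exact continuous_const.mul ((iteratedFDeriv ℝ m f x).coe_continuous.comp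
          (continuous_pi fun _ => continuous_id))
    rw [hsplit, hSzero, zero_add]
    apply hmono
    intro y
    have htay := taylor_line f hf x y K
    have hrem := remainder_bound f K x y B (by rw [hMK] at hB; exact hB)
    have hRform : f (x - y) - S y = (-1 : ℝ)^(K+1) * ∫ t in (0:ℝ)..1,
        ((1-t)^K / (K.factorial : ℝ)) * iteratedFDeriv ℝ (K+1) f (x - t • y) (fun _ => y) := by
      rw [hSdef, hMK] at *
      linarith [htay]
    rw [hRform, hMK]
    rw [abs_mul, abs_pow, abs_neg, abs_one, one_pow, one_mul]
    exact hrem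

end ConvKernelAux

/-- The scaled family `φ_l := 2^{ln} φ(2^l ·)`. -/
def scaleFun (n : ℕ) (φ : (Fin n → ℝ) → ℝ) (l : ℕ) (x : Fin n → ℝ) : ℝ :=
  (2 : ℝ) ^ (l * n) * φ ((2 : ℝ) ^ l • x)


namespace ConvKernelAux

open MeasureTheory Finset

variable {n : ℕ}

lemma oneSided (φ ψ : (Fin n → ℝ) → ℝ) (hφ : IsTestFun n φ) (hψ : IsTestFun n ψ) (M : ℕ)
    (hmom : ∀ β : Fin n → ℕ, (∑ i, β i) < M → (∫ y, (∏ i, y i ^ β i) * ψ y) = 0) :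
    ∃ C : ℝ, 0 < C ∧ ∀ l j : ℕ, l ≤ j → ∀ x : Fin n → ℝ,
      |∫ y, scaleFun n φ l (x - y) * scaleFun n ψ j y| ≤
        C * ((2:ℝ)^l / (2:ℝ)^j)^M * ((2:ℝ)^l)^n := by
  obtain ⟨B, hBnn, hB⟩ := core φ hφ.1 hφ.2 M
  set K := ∫ u : Fin n → ℝ, ‖u‖^M * |ψ u| with hKdef
  have hKnn : 0 ≤ K := integral_nonneg fun u => by positivity
  refine ⟨B * K + 1, by positivity, ?_⟩
  intro l j hlj x
  set a : ℝ := (2:ℝ)^l with hadef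
  set b : ℝ := (2:ℝ)^j with hbdef
  have ha : 0 < a := by positivity
  have hb : 0 < b := by positivity
  set r : ℝ := a / b with hrdef
  have hr : 0 < r := by positivity
  have hrne : r ≠ 0 := ne_of_gt hr
  set g : (Fin n → ℝ) → ℝ := fun v => b^n * ψ (r⁻¹ • v) with hgdef
  have hfr : Module.finrank ℝ (Fin n → ℝ) = n := by
    rw [Module.finrank_fintype_fun_eq_card, Fintype.card_fin]
  -- Step A : rewrite the integral
  have hA : (∫ y, scaleFun n φ l (x - y) * scaleFun n ψ j y)
      = ∫ v, φ (a • x - v) * g v := by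
    have h1 : (fun y => scaleFun n φ l (x - y) * scaleFun n ψ j y)
        = fun y => a^n * (fun v => φ (a • x - v) * g v) (a • y) := by
      funext y
      simp only [scaleFun, hgdef]
      have e1 : (2:ℝ) ^ (l * n) = a ^ n := by rw [hadef, pow_mul]
      have e2 : (2:ℝ) ^ (j * n) = b ^ n := by rw [hbdef, pow_mul]
      have e3 : (2:ℝ) ^ l • (x - y) = a • x - a • y := by rw [← hadef, smul_sub]
      have e4 : r⁻¹ • a • y = (2:ℝ) ^ j • y := by
        rw [smul_smul, ← hbdef]
        congr 1
        field_simp [hrdef]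
        rw [hrdef, div_mul_cancel₀ a hb.ne']
      rw [e1, e2, e3, e4]
      ring
    rw [h1, integral_const_mul, Measure.integral_comp_smul volume
      (fun v => φ (a • x - v) * g v) a, hfr, smul_eq_mul]
    rw [abs_of_pos (by positivity), ← mul_assoc, mul_inv_cancel₀ (by positivity), one_mul]
  -- properties of g
  have hgc : Continuous g :=
    continuous_const.mul (hψ.1.continuous.comp (continuous_const_smul r⁻¹))
  have hgs : HasCompactSupport g := by
    have h1 : HasCompactSupport fun v : Fin n → ℝ => ψ (r⁻¹ • v) :=
      hψ.2.comp_smul (inv_ne_zero hrne)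
    exact h1.mul_left
  have hgmom : ∀ β : Fin n → ℕ, (∑ i, β i) < M →
      (∫ v, (∏ i, v i ^ β i) * g v) = 0 := by
    intro β hβ
    have h2 : (fun v : Fin n → ℝ => (∏ i, v i ^ β i) * g v)
        = fun v => (fun u : Fin n → ℝ => (∏ i, (r * u i) ^ β i) * (b^n * ψ u)) (r⁻¹ • v) := by
      funext v
      simp only [hgdef]
      have hv : ∀ i, r * (r⁻¹ • v) i = v i := fun i => by
        simp only [Pi.smul_apply, smul_eq_mul]
        field_simp
      rw [show (∏ i, (r * (r⁻¹ • v) i) ^ β i) = ∏ i, v i ^ β i from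
        Finset.prod_congr rfl fun i _ => by rw [hv i]]
    rw [h2, Measure.integral_comp_inv_smul volume
      (fun u : Fin n → ℝ => (∏ i, (r * u i) ^ β i) * (b^n * ψ u)) r, hfr]
    have h3 : (∫ u : Fin n → ℝ, (∏ i, (r * u i) ^ β i) * (b^n * ψ u)) = 0 := by
      have h4 : (fun u : Fin n → ℝ => (∏ i, (r * u i) ^ β i) * (b^n * ψ u))
          = fun u => ((∏ i, r ^ β i) * b^n) * ((∏ i, u i ^ β i) * ψ u) := by
        funext u
        simp_rw [mul_pow]
        rw [Finset.prod_mul_distrib]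
        ring
      rw [h4, integral_const_mul, hmom β hβ, mul_zero]
    rw [h3, smul_zero]
  -- the weighted integral of g
  have hgnorm : (∫ v, ‖v‖^M * |g v|) = r^M * (r^n * (b^n * K)) := by
    have h2 : (fun v : Fin n → ℝ => ‖v‖^M * |g v|)
        = fun v => (fun u : Fin n → ℝ => ‖r • u‖^M * (b^n * |ψ u|)) (r⁻¹ • v) := by
      funext v
      simp only [hgdef]
      rw [smul_inv_smul₀ hrne, abs_mul, abs_of_pos (by positivity : (0:ℝ) < b^n)]
    rw [h2, Measure.integral_comp_inv_smul volume
      (fun u : Fin n → ℝ => ‖r • u‖^M * (b^n * |ψ u|)) r, hfr]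
    have h4 : (fun u : Fin n → ℝ => ‖r • u‖^M * (b^n * |ψ u|))
        = fun u => (r^M * b^n) * (‖u‖^M * |ψ u|) := by
      funext u
      rw [norm_smul, Real.norm_eq_abs, abs_of_pos hr, mul_pow]
      ring
    rw [h4, integral_const_mul, ← hKdef, abs_of_pos (by positivity : (0:ℝ) < r^n), smul_eq_mul]
    ring
  -- conclude
  have hbound := hB g hgc hgs hgmom (a • x)
  rw [hgnorm] at hbound
  rw [hA]
  calc |∫ v, φ (a • x - v) * g v| ≤ B * (r^M * (r^n * (b^n * K))) := hbound
    _ = (B * K) * r^M * (r^n * b^n) := by ring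
    _ = (B * K) * r^M * a^n := by rw [← mul_pow]; congr 2; field_simp [hrdef]; rw [hrdef, div_mul_cancel₀ a hb.ne']
    _ ≤ (B * K + 1) * r^M * a^n := by
        have h5 : (0:ℝ) ≤ r^M * a^n := by positivity
        nlinarith [h5]
    _ = (B * K + 1) * ((2:ℝ)^l / (2:ℝ)^j)^M * ((2:ℝ)^l)^n := by rw [hrdef, hadef, hbdef]

end ConvKernelAux

/-- the convolution estimate (3.17) for scaled kernels. -/
theorem convolution_kernel_estimate (n : ℕ) (φ ψ : (Fin n → ℝ) → ℝ)
    (hφ : IsTestFun n φ) (hψ : IsTestFun n ψ)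
    (Lφ Lψ : ℤ) (hLφ : -1 ≤ Lφ) (hLψ : -1 ≤ Lψ)
    (hmφ : MomentsVanish n Lφ φ) (hmψ : MomentsVanish n Lψ ψ) :
    ∃ C : ℝ, 0 < C ∧ ∀ l j : ℕ,
      (l ≤ j →
        eLpNorm (fun x => ∫ y, scaleFun n φ l (x - y) * scaleFun n ψ j y) ∞ volume ≤
          ENNReal.ofReal
            (C * 2 ^ (((l : ℝ) - (j : ℝ)) * ((Lψ : ℝ) + 1)) * 2 ^ ((l : ℝ) * n))) ∧
      (j < l →
        eLpNorm (fun x => ∫ y, scaleFun n φ l (x - y) * scaleFun n ψ j y) ∞ volume ≤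
          ENNReal.ofReal
            (C * 2 ^ (((j : ℝ) - (l : ℝ)) * ((Lφ : ℝ) + 1)) * 2 ^ ((j : ℝ) * n))) := by
  have hmomψ' : ∀ β : Fin n → ℕ, (∑ i, β i) < (Lψ + 1).toNat →
      (∫ y, (∏ i, y i ^ β i) * ψ y) = 0 := by
    intro β hβ
    apply hmψ
    have h1 : ((∑ i, β i : ℕ) : ℤ) < Lψ + 1 := Int.lt_toNat.mp hβ
    omega
  have hmomφ' : ∀ β : Fin n → ℕ, (∑ i, β i) < (Lφ + 1).toNat →
      (∫ y, (∏ i, y i ^ β i) * φ y) = 0 := by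
    intro β hβ
    apply hmφ
    have h1 : ((∑ i, β i : ℕ) : ℤ) < Lφ + 1 := Int.lt_toNat.mp hβ
    omega
  obtain ⟨C1, hC1, hbound1⟩ := ConvKernelAux.oneSided φ ψ hφ hψ (Lψ + 1).toNat hmomψ'
  obtain ⟨C2, hC2, hbound2⟩ := ConvKernelAux.oneSided ψ φ hψ hφ (Lφ + 1).toNat hmomφ'
  have e2 : ∀ l : ℕ, ((2:ℝ)^l)^n = (2:ℝ) ^ ((l:ℝ) * n) := by
    intro l
    rw [← pow_mul, ← Real.rpow_natCast (2:ℝ) (l*n)]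
    congr 1
    push_cast; ring
  have e1 : ∀ (L : ℤ), -1 ≤ L → ∀ l j : ℕ, ((2:ℝ)^l / (2:ℝ)^j) ^ (L+1).toNat
      = (2:ℝ) ^ (((l:ℝ) - j) * ((L:ℝ)+1)) := by
    intro L hL l j
    have eM : (((L+1).toNat : ℕ) : ℝ) = (L : ℝ) + 1 := by
      have h1 := Int.toNat_of_nonneg (by linarith : (0:ℤ) ≤ L + 1)
      exact_mod_cast congrArg (fun z : ℤ => (z : ℝ)) h1
    rw [← eM, Real.rpow_mul (by norm_num : (0:ℝ) ≤ 2), Real.rpow_natCast]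
    congr 1
    rw [Real.rpow_sub (by norm_num : (0:ℝ) < 2), Real.rpow_natCast, Real.rpow_natCast]
  refine ⟨C1 + C2, by positivity, ?_⟩
  intro l j
  constructor
  · intro hlj
    rw [eLpNorm_exponent_top]
    apply eLpNormEssSup_le_of_ae_bound
      (C := (C1 + C2) * 2 ^ (((l:ℝ) - j) * ((Lψ:ℝ)+1)) * 2 ^ ((l:ℝ) * n))
    apply Filter.Eventually.of_forall
    intro x
    rw [Real.norm_eq_abs]
    calc |∫ y, scaleFun n φ l (x - y) * scaleFun n ψ j y|
        ≤ C1 * ((2:ℝ)^l / (2:ℝ)^j) ^ (Lψ+1).toNat * ((2:ℝ)^l)^n := hbound1 l j hlj x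
      _ = C1 * 2 ^ (((l:ℝ) - j) * ((Lψ:ℝ)+1)) * 2 ^ ((l:ℝ) * n) := by
          rw [e1 Lψ hLψ l j, e2 l]
      _ ≤ (C1 + C2) * 2 ^ (((l:ℝ) - j) * ((Lψ:ℝ)+1)) * 2 ^ ((l:ℝ) * n) := by
          have hA : (0:ℝ) ≤ 2 ^ (((l:ℝ) - j) * ((Lψ:ℝ)+1)) := Real.rpow_nonneg (by norm_num) _
          have hBB : (0:ℝ) ≤ 2 ^ ((l:ℝ) * n) := Real.rpow_nonneg (by norm_num) _
          exact mul_le_mul_of_nonneg_right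
            (mul_le_mul_of_nonneg_right (by linarith) hA) hBB
  · intro hjl
    have hsym : (fun x => ∫ y, scaleFun n φ l (x - y) * scaleFun n ψ j y)
        = fun x => ∫ y, scaleFun n ψ j (x - y) * scaleFun n φ l y := by
      funext x
      have h1 := integral_sub_left_eq_self
        (fun t => scaleFun n φ l (x - t) * scaleFun n ψ j t) volume x
      rw [← h1]
      congr 1
      funext t
      rw [_root_.sub_sub_cancel]
      ring
    rw [hsym, eLpNorm_exponent_top]
    apply eLpNormEssSup_le_of_ae_bound
      (C := (C1 + C2) * 2 ^ (((j:ℝ) - l) * ((Lφ:ℝ)+1)) * 2 ^ ((j:ℝ) * n))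
    apply Filter.Eventually.of_forall
    intro x
    rw [Real.norm_eq_abs]
    calc |∫ y, scaleFun n ψ j (x - y) * scaleFun n φ l y|
        ≤ C2 * ((2:ℝ)^j / (2:ℝ)^l) ^ (Lφ+1).toNat * ((2:ℝ)^j)^n := hbound2 j l hjl.le x
      _ = C2 * 2 ^ (((j:ℝ) - l) * ((Lφ:ℝ)+1)) * 2 ^ ((j:ℝ) * n) := by
          rw [e1 Lφ hLφ j l, e2 j]
      _ ≤ (C1 + C2) * 2 ^ (((j:ℝ) - l) * ((Lφ:ℝ)+1)) * 2 ^ ((j:ℝ) * n) := by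
          have hA : (0:ℝ) ≤ 2 ^ (((j:ℝ) - l) * ((Lφ:ℝ)+1)) := Real.rpow_nonneg (by norm_num) _
          have hBB : (0:ℝ) ≤ 2 ^ ((j:ℝ) * n) := Real.rpow_nonneg (by norm_num) _
          exact mul_le_mul_of_nonneg_right
            (mul_le_mul_of_nonneg_right (by linarith) hA) hBB
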